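/- Let k be a field of characteristic p > 0 and s a positive integer. Let Φ : k[z_1, ..., z_s] → k[z_1, ..., z_s] be the map which applies the Frobenius a ↦ a^p to each coefficient of a polynomial (that is, Φ(Σ a_α z^α) = Σ a_α^p z^α). If I ⊆ k[z_1, ..., z_s] is a non-zero homogeneous ideal with Φ(I) ⊆ I, then I contains a non-zero polynomial all of whose coefficients lie in the prime field 𝔽_p; equivalently, I ∩ 𝔽_p[z_1, ..., z_s] ≠ 0, where 𝔽_p[z_1, ..., z_s] is naturally embedded in k[z_1, ..., z_s]. -/
import Mathlib

open MvPolynomial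

lemma aux_fixed {k : Type*} [Field k] {p : ℕ} [Fact p.Prime] [CharP k p] {a : k}
    (h : a ^ p = a) : a ∈ Set.range (ZMod.castHom (dvd_refl p) k) := by
  classical
  by_contra hna
  set φ := ZMod.castHom (dvd_refl p) k with hφ
  have hp1 : 1 < p := (Fact.out : p.Prime).one_lt
  have hinj : Function.Injective φ := φ.injective
  have hne : (Polynomial.X ^ p - Polynomial.X : Polynomial k) ≠ 0 :=
    FiniteField.X_pow_card_sub_X_ne_zero k hp1
  have hroot : ∀ b : k, b ^ p = b →
      b ∈ (Polynomial.X ^ p - Polynomial.X : Polynomial k).roots := by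
    intro b hb
    rw [Polynomial.mem_roots hne]
    simp [Polynomial.IsRoot, hb]
  set T : Finset k := insert a (Finset.univ.image φ) with hT
  have hsub : T ⊆ (Polynomial.X ^ p - Polynomial.X : Polynomial k).roots.toFinset := by
    intro b hb
    rw [Multiset.mem_toFinset]
    rcases Finset.mem_insert.mp hb with rfl | hb
    · exact hroot _ h
    · obtain ⟨i, _, rfl⟩ := Finset.mem_image.mp hb
      apply hroot
      rw [← map_pow, ZMod.pow_card]
  have hnotmem : a ∉ Finset.univ.image φ := by
    simp only [Finset.mem_image, Finset.mem_univ, true_and]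
    rintro ⟨i, rfl⟩
    exact hna ⟨i, rfl⟩
  have hcard : T.card = p + 1 := by
    rw [hT, Finset.card_insert_of_notMem hnotmem,
      Finset.card_image_of_injective _ hinj, Finset.card_univ, ZMod.card]
  have h1 := Finset.card_le_card hsub
  have h2 : (Polynomial.X ^ p - Polynomial.X : Polynomial k).roots.toFinset.card ≤ p :=
    le_trans (Multiset.toFinset_card_le _)
      (le_trans (Polynomial.card_roots' _)
        (le_of_eq (FiniteField.X_pow_card_sub_X_natDegree_eq k hp1)))
  omega

theorem stmt4 (k : Type*) [Field k] (p : ℕ) [Fact p.Prime] [CharP k p]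
    (s : ℕ) (hs : 0 < s)
    (I : Ideal (MvPolynomial (Fin s) k))
    (hI_ne : I ≠ ⊥)
    (hI_hom : ∀ f ∈ I, ∀ n : ℕ, homogeneousComponent n f ∈ I)
    (hI_stab : ∀ f ∈ I, MvPolynomial.map (frobenius k p) f ∈ I) :
    ∃ f ∈ I, f ≠ 0 ∧
      ∀ m : Fin s →₀ ℕ, coeff m f ∈ Set.range (ZMod.castHom (dvd_refl p) k) := by
  classical
  obtain ⟨f0, hf0I, hf0⟩ := Submodule.exists_mem_ne_zero_of_ne_bot hI_ne
  -- predicate: there is a nonzero element of I with support of card n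
  set P : ℕ → Prop := fun n => ∃ f ∈ I, f ≠ 0 ∧ f.support.card = n with hP
  have hex : ∃ n, P n := ⟨f0.support.card, f0, hf0I, hf0, rfl⟩
  obtain ⟨f, hfI, hfne, hfcard⟩ := Nat.find_spec hex
  have hmin : ∀ m < Nat.find hex, ¬ P m := fun m hm => Nat.find_min hex hm
  -- pick a monomial in the support
  obtain ⟨m, hm⟩ := (MvPolynomial.support_nonempty.mpr hfne)
  have hc : coeff m f ≠ 0 := MvPolynomial.mem_support_iff.mp hm
  set g : MvPolynomial (Fin s) k := C (coeff m f)⁻¹ * f with hg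
  have hgI : g ∈ I := Ideal.mul_mem_left I _ hfI
  have hgcoeff : ∀ α, coeff α g = (coeff m f)⁻¹ * coeff α f := by
    intro α; rw [hg, coeff_C_mul]
  have hgm : coeff m g = 1 := by
    rw [hgcoeff, inv_mul_cancel₀ hc]
  have hgne : g ≠ 0 := fun h => by simp [h] at hgm
  have hgsupp : g.support ⊆ f.support := by
    intro α hα
    rw [mem_support_iff] at hα ⊢
    intro h0
    exact hα (by rw [hgcoeff, h0, mul_zero])
  -- the difference
  set h : MvPolynomial (Fin s) k := MvPolynomial.map (frobenius k p) g - g with hh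
  have hhI : h ∈ I := Submodule.sub_mem I (hI_stab g hgI) hgI
  have hhcoeff : ∀ α, coeff α h = (coeff α g) ^ p - coeff α g := by
    intro α
    rw [hh, coeff_sub, coeff_map, frobenius_def]
  have hhm : coeff m h = 0 := by rw [hhcoeff, hgm, one_pow, sub_self]
  have hhsupp : h.support ⊆ f.support.erase m := by
    intro α hα
    rw [mem_support_iff] at hα
    rcases eq_or_ne α m with rfl | hαm
    · exact absurd hhm hα
    refine Finset.mem_erase.mpr ⟨hαm, hgsupp ?_⟩
    rw [mem_support_iff]
    intro h0
    exact hα (by rw [hhcoeff, h0, zero_pow (Fact.out : p.Prime).ne_zero, sub_zero])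
  have hhzero : h = 0 := by
    by_contra hne0
    have hlt : h.support.card < Nat.find hex := by
      calc h.support.card ≤ (f.support.erase m).card := Finset.card_le_card hhsupp
        _ < f.support.card := Finset.card_erase_lt_of_mem hm
        _ = Nat.find hex := hfcard
    exact hmin _ hlt ⟨h, hhI, hne0, rfl⟩
  refine ⟨g, hgI, hgne, fun α => ?_⟩
  apply aux_fixed
  have := hhcoeff α
  rw [hhzero] at this
  simp only [coeff_zero] at this
  exact sub_eq_zero.mp this.symm
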